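/- Let T : (ℝⁿ)^d → ℝ be a symmetric multilinear map, i.e., T(x_{σ(1)},…,x_{σ(d)}) = T(x₁,…,x_d) for every permutation σ of {1,…,d} and all x₁,…,x_d ∈ ℝⁿ. Then sup { |T(x₁,…,x_d)| : ‖x₁‖ = ⋯ = ‖x_d‖ = 1 } = sup { |T(x,…,x)| : ‖x‖ = 1 }, where ‖·‖ is the Euclidean norm on ℝⁿ (Banach's theorem on symmetric multilinear forms). -/

import Mathlib

open Function

private abbrev EE (n : ℕ) := EuclideanSpace ℝ (Fin n)

private lemma upd_swap {n d : ℕ} {x : Fin d → EE n} {i j : Fin d} (hij : i ≠ j)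
    (s t : EE n) :
    (fun k => Function.update (Function.update x i s) j t (Equiv.swap i j k))
      = Function.update (Function.update x i t) j s := by
  funext k
  rcases eq_or_ne k i with rfl | hki
  · simp [Equiv.swap_apply_left, Function.update_apply, hij, hij.symm]
  · rcases eq_or_ne k j with rfl | hkj
    · simp [Equiv.swap_apply_right, Function.update_apply, hij, hij.symm]
    · simp [Equiv.swap_apply_of_ne_of_ne hki hkj, Function.update_apply, hki, hkj]

private lemma T_swap {n d : ℕ}
    (T : ContinuousMultilinearMap ℝ (fun _ : Fin d => EE n) ℝ)
    (hsymm : ∀ (σ : Equiv.Perm (Fin d)) (x : Fin d → EE n),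
      T (fun i => x (σ i)) = T x)
    {i j : Fin d} (hij : i ≠ j) (x : Fin d → EE n) (s t : EE n) :
    T (Function.update (Function.update x i t) j s)
      = T (Function.update (Function.update x i s) j t) := by
  rw [← upd_swap hij s t]
  exact hsymm (Equiv.swap i j) _

private lemma T_polar {n d : ℕ}
    (T : ContinuousMultilinearMap ℝ (fun _ : Fin d => EE n) ℝ)
    (hsymm : ∀ (σ : Equiv.Perm (Fin d)) (x : Fin d → EE n),
      T (fun i => x (σ i)) = T x)
    {i j : Fin d} (hij : i ≠ j) (x : Fin d → EE n) (a b : EE n) :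
    T (Function.update (Function.update x i (a + b)) j (a + b))
      - T (Function.update (Function.update x i (a - b)) j (a - b))
      = 4 * T (Function.update (Function.update x i a) j b) := by
  have hL : ∀ s s' t : EE n,
      T (Function.update (Function.update x i (s + s')) j t)
        = T (Function.update (Function.update x i s) j t)
          + T (Function.update (Function.update x i s') j t) := by
    intro s s' t
    rw [Function.update_comm hij (s + s') t x, T.map_update_add,
      ← Function.update_comm hij s t x, ← Function.update_comm hij s' t x]
  have hLs : ∀ s s' t : EE n,
      T (Function.update (Function.update x i (s - s')) j t)
        = T (Function.update (Function.update x i s) j t)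
          - T (Function.update (Function.update x i s') j t) := by
    intro s s' t
    rw [Function.update_comm hij (s - s') t x, T.map_update_sub,
      ← Function.update_comm hij s t x, ← Function.update_comm hij s' t x]
  have hR : ∀ s t t' : EE n,
      T (Function.update (Function.update x i s) j (t + t'))
        = T (Function.update (Function.update x i s) j t)
          + T (Function.update (Function.update x i s) j t') :=
    fun s t t' => T.map_update_add _ j t t'
  have hRs : ∀ s t t' : EE n,
      T (Function.update (Function.update x i s) j (t - t'))
        = T (Function.update (Function.update x i s) j t)
          - T (Function.update (Function.update x i s) j t') :=
    fun s t t' => T.map_update_sub _ j t t'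
  have hsw := T_swap T hsymm hij x b a
  rw [hR, hL, hL, hRs, hLs, hLs, hsw]
  ring

private lemma T_smul2 {n d : ℕ}
    (T : ContinuousMultilinearMap ℝ (fun _ : Fin d => EE n) ℝ)
    {i j : Fin d} (hij : i ≠ j) (x : Fin d → EE n) (c : ℝ) (u v : EE n) :
    T (Function.update (Function.update x i (c • u)) j (c • v))
      = (c * c) * T (Function.update (Function.update x i u) j v) := by
  rw [T.map_update_smul, Function.update_comm hij (c • u) v x, T.map_update_smul,
    ← Function.update_comm hij u v x, smul_smul, smul_eq_mul]

private lemma sum_upd {n d : ℕ} {i j : Fin d} (hij : i ≠ j) (x : Fin d → EE n)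
    (s t : EE n) :
    ∑ k, Function.update (Function.update x i s) j t k
      = ((∑ k, x k) - x i - x j) + s + t := by
  classical
  have h1 : ∑ k, Function.update (Function.update x i s) j t k
      = t + ∑ k ∈ Finset.univ \ {j}, Function.update x i s k :=
    Finset.sum_update_of_mem (Finset.mem_univ j) _ _
  have hi : i ∈ Finset.univ \ {j} := by simp [hij]
  have h2 : ∑ k ∈ Finset.univ \ {j}, Function.update x i s k
      = s + ∑ k ∈ (Finset.univ \ {j}) \ {i}, x k :=
    Finset.sum_update_of_mem hi _ _
  have h3 : ∑ k, x k = x j + ∑ k ∈ Finset.univ \ {j}, x k := by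
    have := Finset.sum_update_of_mem (Finset.mem_univ j) x (x j)
    simpa [Function.update_eq_self] using this
  have h4 : ∑ k ∈ Finset.univ \ {j}, x k
      = x i + ∑ k ∈ (Finset.univ \ {j}) \ {i}, x k := by
    have := Finset.sum_update_of_mem hi x (x i)
    simpa [Function.update_eq_self] using this
  rw [h1, h2, h3, h4]
  abel

private lemma norm_upd {n d : ℕ} {i j : Fin d} {x : Fin d → EE n}
    (hx : ∀ k, ‖x k‖ = 1) {s t : EE n} (hs : ‖s‖ = 1) (ht : ‖t‖ = 1) :
    ∀ k, ‖Function.update (Function.update x i s) j t k‖ = 1 := by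
  intro k
  rcases eq_or_ne k j with rfl | hkj
  · simpa using ht
  · rw [Function.update_of_ne hkj]
    rcases eq_or_ne k i with rfl | hki
    · simpa using hs
    · rw [Function.update_of_ne hki]; exact hx k

set_option maxHeartbeats 2000000 in
/-- Banach's theorem on symmetric multilinear forms: for a symmetric continuous
multilinear map `T : (ℝⁿ)^d → ℝ`, the supremum of `|T(x₁,…,x_d)|` over tuples
of unit vectors equals the supremum of `|T(x,…,x)|` over unit vectors. -/
theorem banach_symmetric_multilinear (n d : ℕ) (hn : 0 < n)
    (T : ContinuousMultilinearMap ℝ (fun _ : Fin d => EuclideanSpace ℝ (Fin n)) ℝ)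
    (hsymm : ∀ (σ : Equiv.Perm (Fin d)) (x : Fin d → EuclideanSpace ℝ (Fin n)),
      T (fun i => x (σ i)) = T x) :
    sSup {r : ℝ | ∃ x : Fin d → EuclideanSpace ℝ (Fin n),
        (∀ i, ‖x i‖ = 1) ∧ r = |T x|} =
    sSup {r : ℝ | ∃ x : EuclideanSpace ℝ (Fin n),
        ‖x‖ = 1 ∧ r = |T (fun _ => x)|} := by
  classical
  -- a unit vector
  set e : EE n := EuclideanSpace.single (⟨0, hn⟩ : Fin n) (1 : ℝ) with he'
  have he : ‖e‖ = 1 := by simp [he']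
  -- the compact set of unit tuples
  set K : Set (Fin d → EE n) := Set.univ.pi (fun _ => Metric.sphere (0 : EE n) 1)
    with hK'
  have hKmem : ∀ y : Fin d → EE n, y ∈ K ↔ ∀ i, ‖y i‖ = 1 := by
    intro y; simp [hK', Set.mem_univ_pi, mem_sphere_zero_iff_norm]
  have hK : IsCompact K := isCompact_univ_pi fun _ => isCompact_sphere 0 1
  have hKne : K.Nonempty := ⟨fun _ => e, (hKmem _).2 fun _ => he⟩
  have hfc : Continuous (fun y : Fin d → EE n => |T y|) := T.coe_continuous.abs
  obtain ⟨x₀, hx₀K, hx₀⟩ := hK.exists_isMaxOn hKne hfc.continuousOn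
  set m := |T x₀| with hm
  have hub : ∀ y : Fin d → EE n, (∀ i, ‖y i‖ = 1) → |T y| ≤ m :=
    fun y hy => hx₀ ((hKmem y).2 hy)
  -- second maximization over the set of maximizers
  set S : Set (Fin d → EE n) := K ∩ {y | |T y| = m} with hS'
  have hS : IsCompact S := hK.inter_right (isClosed_eq hfc continuous_const)
  have hSne : S.Nonempty := ⟨x₀, hx₀K, rfl⟩
  have hgc : Continuous (fun y : Fin d → EE n => ‖∑ i, y i‖ ^ 2) := by fun_prop
  obtain ⟨x, hxS, hxg⟩ := hS.exists_isMaxOn hSne hgc.continuousOn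
  have hxK : ∀ i, ‖x i‖ = 1 := (hKmem x).1 hxS.1
  have hxm : |T x| = m := hxS.2
  -- key claim: at the double maximizer all coordinates are equal up to sign
  have key : ∀ i j : Fin d, i ≠ j → x j = x i ∨ x j = -x i := by
    intro i j hij
    set t : ℝ := inner ℝ (x i) (x j) with ht'
    suffices ht : t = 1 ∨ t = -1 by
      rcases ht with h1 | h1
      · left
        exact ((inner_eq_one_iff_of_norm_eq_one (𝕜 := ℝ) (hxK i) (hxK j)).1 h1).symm
      · right
        have hn' : ‖-x j‖ = 1 := by rw [norm_neg]; exact hxK j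
        have h2 : (inner ℝ (x i) (-x j) : ℝ) = 1 := by
          rw [inner_neg_right, ← ht', h1]; ring
        have := (inner_eq_one_iff_of_norm_eq_one (𝕜 := ℝ) (hxK i) hn').1 h2
        rw [this, neg_neg]
    by_contra hcon
    push_neg at hcon
    have habs : |t| ≤ 1 := by
      have := abs_real_inner_le_norm (x i) (x j)
      rwa [hxK i, hxK j, one_mul] at this
    have ht1 : t < 1 := lt_of_le_of_ne (abs_le.1 habs).2 hcon.1
    have ht2 : -1 < t := lt_of_le_of_ne ((abs_le.1 habs).1) (Ne.symm hcon.2)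
    have h1 : ‖x i + x j‖ ^ 2 = 2 + 2 * t := by
      rw [norm_add_sq_real, hxK i, hxK j, ← ht']; ring
    have h2 : ‖x i - x j‖ ^ 2 = 2 - 2 * t := by
      rw [norm_sub_sq_real, hxK i, hxK j, ← ht']; ring
    have hp : (0 : ℝ) < 2 + 2 * t := by linarith
    have hq : (0 : ℝ) < 2 - 2 * t := by linarith
    have hne1 : x i + x j ≠ 0 := by
      intro h0; rw [h0, norm_zero] at h1; simp at h1; linarith
    have hne2 : x i - x j ≠ 0 := by
      intro h0; rw [h0, norm_zero] at h2; simp at h2; linarith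
    set c : ℝ := ‖x i + x j‖ with hc'
    have hc0 : 0 < c := norm_pos_iff.2 hne1
    set u : EE n := c⁻¹ • (x i + x j) with hu'
    set v : EE n := ‖x i - x j‖⁻¹ • (x i - x j) with hv'
    have hun : ‖u‖ = 1 := norm_smul_inv_norm hne1
    have hvn : ‖v‖ = 1 := norm_smul_inv_norm hne2
    have hcu : x i + x j = c • u := by
      rw [hu', smul_smul, mul_inv_cancel₀ (ne_of_gt hc0), one_smul]
    have hcv : x i - x j = ‖x i - x j‖ • v := by
      rw [hv', smul_smul, mul_inv_cancel₀ (norm_ne_zero_iff.2 hne2), one_smul]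
    have hx_eq : Function.update (Function.update x i (x i)) j (x j) = x := by
      simp
    have hpolar := T_polar T hsymm hij x (x i) (x j)
    rw [hx_eq] at hpolar
    have keyu : T (Function.update (Function.update x i (x i + x j)) j (x i + x j))
        = (c * c) * T (Function.update (Function.update x i u) j u) := by
      rw [hcu]; exact T_smul2 T hij x c u u
    have keyv : T (Function.update (Function.update x i (x i - x j)) j (x i - x j))
        = (‖x i - x j‖ * ‖x i - x j‖)
            * T (Function.update (Function.update x i v) j v) := by
      conv_lhs => rw [hcv]
      exact T_smul2 T hij x _ v v
    have bu : |T (Function.update (Function.update x i u) j u)| ≤ m :=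
      hub _ (norm_upd hxK hun hun)
    have bv : |T (Function.update (Function.update x i v) j v)| ≤ m :=
      hub _ (norm_upd hxK hvn hvn)
    have hcsq : c * c = 2 + 2 * t := by rw [← h1]; ring
    have hvsq : ‖x i - x j‖ * ‖x i - x j‖ = 2 - 2 * t := by rw [← h2]; ring
    have hm0 : 0 ≤ m := hm ▸ abs_nonneg _
    have h4m : 4 * m ≤ (2 + 2 * t) * |T (Function.update (Function.update x i u) j u)|
        + (2 - 2 * t) * m := by
      calc 4 * m = |4 * T x| := by rw [abs_mul, ← hxm]; norm_num
        _ = |T (Function.update (Function.update x i (x i + x j)) j (x i + x j))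
              - T (Function.update (Function.update x i (x i - x j)) j (x i - x j))| := by
            rw [hpolar]
        _ ≤ |T (Function.update (Function.update x i (x i + x j)) j (x i + x j))|
              + |T (Function.update (Function.update x i (x i - x j)) j (x i - x j))| :=
            abs_sub _ _
        _ = (2 + 2 * t) * |T (Function.update (Function.update x i u) j u)|
              + (2 - 2 * t) * |T (Function.update (Function.update x i v) j v)| := by
            have eqa : |c * c * T (Function.update (Function.update x i u) j u)|
                = (2 + 2 * t) * |T (Function.update (Function.update x i u) j u)| := by
              rw [abs_mul, abs_of_pos (show (0:ℝ) < c * c by rw [hcsq]; exact hp), hcsq]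
            have eqb : |‖x i - x j‖ * ‖x i - x j‖
                  * T (Function.update (Function.update x i v) j v)|
                = (2 - 2 * t) * |T (Function.update (Function.update x i v) j v)| := by
              rw [abs_mul, abs_of_pos (show (0:ℝ) < ‖x i - x j‖ * ‖x i - x j‖ by
                rw [hvsq]; exact hq), hvsq]
            rw [keyu, keyv, eqa, eqb]
        _ ≤ _ := add_le_add_right (mul_le_mul_of_nonneg_left bv hq.le) _
    have hTuu : |T (Function.update (Function.update x i u) j u)| = m := by
      have hge : m ≤ |T (Function.update (Function.update x i u) j u)| := by
        by_contra hlt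
        push_neg at hlt
        have := mul_lt_mul_of_pos_left hlt hp
        linarith
      linarith [bu]
    -- the perturbation increasing ‖∑ y‖²
    set r : EE n := (∑ k, x k) - x i - x j with hr'
    set ip : ℝ := inner ℝ r u with hip'
    set ε : ℝ := if 0 ≤ ip then 1 else -1 with hε'
    have hε2 : ε * ε = 1 := by rw [hε']; split <;> norm_num
    have hεabs : |ε| = 1 := by rw [hε']; split <;> norm_num
    set z := Function.update (Function.update x i (ε • u)) j (ε • u) with hz'
    have hzn : ∀ k, ‖z k‖ = 1 := by
      have h : ‖ε • u‖ = 1 := by rw [norm_smul, hun, Real.norm_eq_abs, hεabs, one_mul]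
      exact norm_upd hxK h h
    have hzT : |T z| = m := by
      rw [hz', T_smul2 T hij x ε u u, hε2, one_mul]; exact hTuu
    have hzS : z ∈ S := ⟨(hKmem z).2 hzn, hzT⟩
    have hsum_z : ∑ k, z k = r + (2 * ε) • u := by
      rw [hz', sum_upd hij, ← hr', mul_smul, two_smul]; abel
    have hsum_x : ∑ k, x k = r + c • u := by
      rw [hr', ← hcu]; abel
    have hun2 : ‖(2 * ε) • u‖ = 2 := by
      rw [norm_smul, hun, Real.norm_eq_abs, abs_mul, hεabs]; norm_num
    have hunc : ‖c • u‖ = c := by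
      rw [norm_smul, hun, Real.norm_eq_abs, abs_of_pos hc0]; ring
    have hgz : ‖∑ k, z k‖ ^ 2 = ‖r‖ ^ 2 + 4 * (ε * ip) + 4 := by
      rw [hsum_z, norm_add_sq_real, real_inner_smul_right, ← hip', hun2]; ring
    have hgx : ‖∑ k, x k‖ ^ 2 = ‖r‖ ^ 2 + 2 * (c * ip) + (2 + 2 * t) := by
      rw [hsum_x, norm_add_sq_real, real_inner_smul_right, ← hip', hunc, ← hcsq]
      ring
    have hgle : ‖∑ k, z k‖ ^ 2 ≤ ‖∑ k, x k‖ ^ 2 := hxg hzS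
    have hcle : c < 2 := by nlinarith [hcsq, hc0, ht1]
    have h2c : 2 * (c * ip) ≤ 4 * (ε * ip) := by
      rcases le_or_gt 0 ip with h | h
      · rw [hε', if_pos h]; nlinarith
      · rw [hε', if_neg (not_le.2 h)]; nlinarith
    rw [hgz, hgx] at hgle
    linarith
  -- the greatest element of the tuple set
  have hAgr : IsGreatest {r : ℝ | ∃ y : Fin d → EuclideanSpace ℝ (Fin n),
      (∀ i, ‖y i‖ = 1) ∧ r = |T y|} m := by
    constructor
    · exact ⟨x₀, (hKmem x₀).1 hx₀K, hm⟩
    · rintro r ⟨y, hy, rfl⟩; exact hub y hy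
  -- the greatest element of the diagonal set
  have hBgr : IsGreatest {r : ℝ | ∃ y : EuclideanSpace ℝ (Fin n),
      ‖y‖ = 1 ∧ r = |T (fun _ => y)|} m := by
    constructor
    · rcases Nat.eq_zero_or_pos d with hd | hd
      · subst hd
        refine ⟨e, he, ?_⟩
        rw [hm, show x₀ = (fun _ => e : Fin 0 → EE n) from funext fun k => k.elim0]
      · set i₀ : Fin d := ⟨0, hd⟩ with hi₀
        have hch : ∀ k, ∃ cc : ℝ, |cc| = 1 ∧ x k = cc • x i₀ := by
          intro k
          rcases eq_or_ne k i₀ with rfl | hk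
          · exact ⟨1, by norm_num, (one_smul ℝ _).symm⟩
          · rcases key i₀ k (Ne.symm hk) with h | h
            · exact ⟨1, by norm_num, by rw [h, one_smul]⟩
            · exact ⟨-1, by norm_num, by rw [h]; simp⟩
        choose cc hcc1 hcc2 using hch
        have hxe : x = fun k => cc k • x i₀ := funext hcc2
        have hTx : T x = (∏ k, cc k) * T (fun _ => x i₀) := by
          rw [show T x = T (fun k => cc k • x i₀) from by rw [← hxe],
            T.map_smul_univ cc (fun _ => x i₀), smul_eq_mul]
        refine ⟨x i₀, hxK i₀, ?_⟩
        rw [← hxm, hTx, abs_mul, Finset.abs_prod]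
        simp [hcc1]
    · rintro r ⟨y, hy, rfl⟩; exact hub (fun _ => y) (fun _ => hy)
  rw [hAgr.csSup_eq, hBgr.csSup_eq]
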